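/- Let G be a finite connected multigraph with a positive length ℓ_h > 0 assigned to each half-edge h, with ℓ_{-h} = ℓ_h. For each cut b, let m(b) = {h ∈ b : ℓ_h = min_{k∈b} ℓ_k} and define mdiv_b(φ) = ∑_{h ∈ m(b)} φ(h) for antisymmetric φ. Then the linear map mdiv : 𝓐 → ℝ^{|B|}, φ ↦ (mdiv_b(φ))_{b∈B}, has rank exactly |V| - 1. -/

import Mathlib

namespace PaperGraph

variable {H V : Type*}

/-- The subspace of antisymmetric functions on half-edges. -/
def asymSpace (ι : H → H) : Submodule ℝ (H → ℝ) where
  carrier := {f | ∀ h, f (ι h) = - f h}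
  add_mem' := by
    intro a b ha hb h
    simp only [Pi.add_apply, ha h, hb h]
    ring
  zero_mem' := by intro h; simp
  smul_mem' := by
    intro c a ha h
    simp only [Pi.smul_apply, ha h, smul_eq_mul]
    ring

/-- Connectedness of the multigraph with half-edge set `H`, involution `ι`
and initial-vertex map `vmap`. -/
def Connected (ι : H → H) (vmap : H → V) : Prop :=
  ∀ a b : V, Relation.ReflTransGen (fun u w => ∃ h, vmap h = u ∧ vmap (ι h) = w) a b

/-- The characteristic vector `a_b` of the cut determined by the vertex set `S`. -/
def cutFun [DecidableEq V] (ι : H → H) (vmap : H → V) (S : Finset V) : H → ℝ :=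
  fun h => (if vmap h ∈ S then (1:ℝ) else 0) - (if vmap (ι h) ∈ S then (1:ℝ) else 0)

/-- The cut space `𝓑`. -/
def cutSpace [DecidableEq V] (ι : H → H) (vmap : H → V) : Submodule ℝ (H → ℝ) :=
  Submodule.span ℝ (Set.range (cutFun ι vmap))

/-- The characteristic vector `a_c = ∑_{h∈c} (e_h - e_{-h})` of a cycle. -/
def cycFun [Fintype H] [DecidableEq H] (ι : H → H) {n : ℕ} (c : ZMod (n+1) → H) : H → ℝ :=
  fun k => ∑ i : ZMod (n+1), ((if c i = k then (1:ℝ) else 0) - (if ι (c i) = k then (1:ℝ) else 0))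

/-- A simple cycle: a cyclic sequence of half-edges, consecutively incident,
visiting pairwise distinct vertices. -/
def IsCycle (ι : H → H) (vmap : H → V) {n : ℕ} (c : ZMod (n+1) → H) : Prop :=
  Function.Injective (fun i => vmap (c i)) ∧ ∀ i, vmap (ι (c i)) = vmap (c (i+1))

/-- The cycle space `𝓒`. -/
def cycleSpace [Fintype H] [DecidableEq H] (ι : H → H) (vmap : H → V) : Submodule ℝ (H → ℝ) :=
  Submodule.span ℝ {g | ∃ (n : ℕ) (c : ZMod (n+1) → H), IsCycle ι vmap c ∧ g = cycFun ι c}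

/-- The set of half-edges in the cut from `S` to its complement. -/
def cutset [Fintype H] [DecidableEq V] (ι : H → H) (vmap : H → V) (S : Finset V) : Finset H :=
  Finset.univ.filter (fun h => vmap h ∈ S ∧ vmap (ι h) ∉ S)

/-- The set `m(b)` of minimal-length half-edges in the cut determined by `S`. -/
noncomputable def minCut [Fintype H] [DecidableEq V] (ι : H → H) (vmap : H → V) (ℓ : H → ℝ) (S : Finset V) :
    Finset H :=
  (cutset ι vmap S).filter (fun h => ∀ k ∈ cutset ι vmap S, ℓ h ≤ ℓ k)

/-- The discrete gradient `grad(f)(h) = f(v(-h)) - f(v(h))`. -/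
def gradFun (ι : H → H) (vmap : H → V) (f : V → ℝ) : H → ℝ :=
  fun h => f (vmap (ι h)) - f (vmap h)

end PaperGraph

open PaperGraph

/-- The linear map `mdiv`, sending `φ` to the family of sums of `φ` over the
minimal-length half-edges of each cut. -/
noncomputable def mdivMap {H V : Type*} [Fintype H] [DecidableEq V]
    (ι : H → H) (vmap : H → V) (ℓ : H → ℝ) : (H → ℝ) →ₗ[ℝ] (Finset V → ℝ) where
  toFun φ := fun S => ∑ h ∈ minCut ι vmap ℓ S, φ h
  map_add' := by
    intro φ ψ
    funext S
    simp [Finset.sum_add_distrib]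
  map_smul' := by
    intro c φ
    funext S
    simp [Finset.mul_sum]

namespace S4

open Finset Module

variable {H V : Type*} [Fintype H] [DecidableEq H] [Fintype V] [DecidableEq V]

/-! ### rank function on lengths -/

noncomputable def rnk (ℓ : H → ℝ) (h : H) : ℕ :=
  ((Finset.image ℓ Finset.univ).filter (fun t => t ≤ ℓ h)).card

lemma rnk_mono (ℓ : H → ℝ) {h k : H} (hle : ℓ h ≤ ℓ k) : rnk ℓ h ≤ rnk ℓ k := by
  apply Finset.card_le_card
  intro t ht
  simp only [Finset.mem_filter] at ht ⊢
  exact ⟨ht.1, ht.2.trans hle⟩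

lemma rnk_strict (ℓ : H → ℝ) {h k : H} (hlt : ℓ h < ℓ k) : rnk ℓ h < rnk ℓ k := by
  apply Finset.card_lt_card
  constructor
  · intro t ht
    simp only [Finset.mem_filter] at ht ⊢
    exact ⟨ht.1, ht.2.trans hlt.le⟩
  · intro hsub
    have : ℓ k ∈ (Finset.image ℓ Finset.univ).filter (fun t => t ≤ ℓ h) := by
      apply hsub
      simp only [Finset.mem_filter]
      exact ⟨Finset.mem_image_of_mem ℓ (Finset.mem_univ k), le_refl _⟩
    simp only [Finset.mem_filter] at this
    exact absurd this.2 (not_le.mpr hlt)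

lemma lt_of_rnk_lt (ℓ : H → ℝ) {h k : H} (hlt : rnk ℓ h < rnk ℓ k) : ℓ h < ℓ k := by
  by_contra hc
  exact absurd (rnk_mono ℓ (not_lt.mp hc)) (not_le.mpr hlt)

lemma eq_of_rnk_eq (ℓ : H → ℝ) {h k : H} (heq : rnk ℓ h = rnk ℓ k) : ℓ h = ℓ k := by
  rcases lt_trichotomy (ℓ h) (ℓ k) with hlt | he | hgt
  · exact absurd (rnk_strict ℓ hlt) (by omega)
  · exact he
  · exact absurd (rnk_strict ℓ hgt) (by omega)

lemma rnk_pos (ℓ : H → ℝ) (h : H) : 1 ≤ rnk ℓ h := by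
  have : ℓ h ∈ (Finset.image ℓ Finset.univ).filter (fun t => t ≤ ℓ h) := by
    simp only [Finset.mem_filter]
    exact ⟨Finset.mem_image_of_mem ℓ (Finset.mem_univ h), le_refl _⟩
  exact Finset.card_pos.mpr ⟨_, this⟩

lemma rnk_le_card (ℓ : H → ℝ) (h : H) : rnk ℓ h ≤ (Finset.image ℓ Finset.univ).card :=
  Finset.card_le_card (Finset.filter_subset _ _)

/-! ### the filtration spaces -/

def Espace (ι : H → H) (vmap : H → V) (ℓ : H → ℝ) (j : ℕ) : Submodule ℝ (V → ℝ) where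
  carrier := {f | ∀ h, rnk ℓ h ≤ j → f (vmap h) = f (vmap (ι h))}
  add_mem' := by intro a b ha hb h hh; simp [ha h hh, hb h hh]
  zero_mem' := by intro h _; simp
  smul_mem' := by intro c a ha h hh; simp [ha h hh]

lemma Espace_antitone (ι : H → H) (vmap : H → V) (ℓ : H → ℝ) {j j' : ℕ} (hj : j ≤ j') :
    Espace ι vmap ℓ j' ≤ Espace ι vmap ℓ j := by
  intro f hf h hh
  exact hf h (hh.trans hj)

noncomputable def gmap (ι : H → H) (vmap : H → V) (ℓ : H → ℝ) (j : ℕ) :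
    (V → ℝ) →ₗ[ℝ] (H → ℝ) where
  toFun f := fun h => if rnk ℓ h = j then f (vmap h) - f (vmap (ι h)) else 0
  map_add' := by
    intro a b; funext h
    by_cases hr : rnk ℓ h = j <;> simp [hr] <;> ring
  map_smul' := by
    intro c a; funext h
    by_cases hr : rnk ℓ h = j <;> simp [hr] <;> ring

noncomputable def Lsub (ι : H → H) (vmap : H → V) (ℓ : H → ℝ) (j : ℕ) : Submodule ℝ (H → ℝ) :=
  Submodule.map (gmap ι vmap ℓ (j + 1)) (Espace ι vmap ℓ j)

noncomputable def Uspace (ι : H → H) (vmap : H → V) (ℓ : H → ℝ) : Submodule ℝ (H → ℝ) :=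
  (Finset.range (Finset.image ℓ Finset.univ).card).sup (Lsub ι vmap ℓ)

set_option synthInstance.maxHeartbeats 1000000 in
lemma step_bound (ι : H → H) (vmap : H → V) (ℓ : H → ℝ) (j : ℕ) :
    finrank ℝ (Lsub ι vmap ℓ j) + finrank ℝ (Espace ι vmap ℓ (j + 1)) ≤
      finrank ℝ (Espace ι vmap ℓ j) := by
  set E := Espace ι vmap ℓ j
  set E' := Espace ι vmap ℓ (j + 1)
  set g := (gmap ι vmap ℓ (j + 1)).comp E.subtype
  have hrange : LinearMap.range g = Lsub ι vmap ℓ j := by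
    rw [LinearMap.range_comp, Submodule.range_subtype]
    rfl
  have hker : finrank ℝ E' ≤ finrank ℝ (LinearMap.ker g) := by
    have hle : E' ≤ E := Espace_antitone ι vmap ℓ (Nat.le_succ j)
    have e : finrank ℝ (Submodule.comap E.subtype E') = finrank ℝ E' :=
      (Submodule.comapSubtypeEquivOfLe hle).finrank_eq
    rw [← e]
    apply Submodule.finrank_mono
    intro x hx
    simp only [Submodule.mem_comap] at hx
    simp only [LinearMap.mem_ker]
    funext h
    show (if rnk ℓ h = j + 1 then (x : V → ℝ) (vmap h) - (x : V → ℝ) (vmap (ι h)) else 0) = 0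
    by_cases hr : rnk ℓ h = j + 1
    · rw [if_pos hr]
      exact sub_eq_zero.mpr (hx h (le_of_eq hr))
    · rw [if_neg hr]
  have hrn := LinearMap.finrank_range_add_finrank_ker g
  rw [hrange] at hrn
  omega

lemma telescope (ι : H → H) (vmap : H → V) (ℓ : H → ℝ) (n : ℕ) :
    (∑ j ∈ Finset.range n, finrank ℝ (Lsub ι vmap ℓ j)) + finrank ℝ (Espace ι vmap ℓ n) ≤
      finrank ℝ (Espace ι vmap ℓ 0) := by
  induction n with
  | zero => simp
  | succ n ih =>
    rw [Finset.sum_range_succ]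
    have := step_bound ι vmap ℓ n
    omega

lemma finrank_sup_le {M : Type*} [AddCommGroup M] [Module ℝ M] [FiniteDimensional ℝ M]
    (s : Finset ℕ) (L : ℕ → Submodule ℝ M) :
    finrank ℝ ↥(s.sup L) ≤ ∑ j ∈ s, finrank ℝ (L j) := by
  induction s using Finset.induction with
  | empty => simp
  | insert _ _ ha ih =>
    rename_i a s
    rw [Finset.sup_insert, Finset.sum_insert ha]
    exact le_trans (Submodule.finrank_add_le_finrank_add_finrank _ _) (by omega)

lemma uspace_dim (ι : H → H) (vmap : H → V) (ℓ : H → ℝ) [Nonempty V] :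
    finrank ℝ (Uspace ι vmap ℓ) ≤ Fintype.card V - 1 := by
  set k := (Finset.image ℓ Finset.univ).card
  have h1 : finrank ℝ (Uspace ι vmap ℓ) ≤ ∑ j ∈ Finset.range k, finrank ℝ (Lsub ι vmap ℓ j) :=
    finrank_sup_le _ _
  have h2 := telescope ι vmap ℓ k
  have h3 : 1 ≤ finrank ℝ (Espace ι vmap ℓ k) := by
    have hmem : (fun _ => (1:ℝ)) ∈ Espace ι vmap ℓ k := by intro h _; rfl
    have hspan : Submodule.span ℝ {(fun _ => (1:ℝ) : V → ℝ)} ≤ Espace ι vmap ℓ k := by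
      rw [Submodule.span_le, Set.singleton_subset_iff]; exact hmem
    have hone : (fun _ => (1:ℝ) : V → ℝ) ≠ 0 := by
      intro hc
      have := congrFun hc (Classical.arbitrary V)
      norm_num at this
    calc 1 = finrank ℝ (Submodule.span ℝ {(fun _ => (1:ℝ) : V → ℝ)}) :=
            (finrank_span_singleton hone).symm
      _ ≤ _ := Submodule.finrank_mono hspan
  have h4 : finrank ℝ (Espace ι vmap ℓ 0) ≤ Fintype.card V := by
    calc finrank ℝ (Espace ι vmap ℓ 0) ≤ finrank ℝ (V → ℝ) := Submodule.finrank_le _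
      _ = Fintype.card V := Module.finrank_pi ℝ
  omega

end S4

namespace S4b
open Finset Module S4

variable {H V : Type*} [Fintype H] [DecidableEq H] [Fintype V] [DecidableEq V]

noncomputable def aFun (ι : H → H) (vmap : H → V) (ℓ : H → ℝ) (S : Finset V) : H → ℝ :=
  fun h => (if h ∈ minCut ι vmap ℓ S then (1:ℝ) else 0) -
    (if ι h ∈ minCut ι vmap ℓ S then (1:ℝ) else 0)

lemma mem_cutset_iff (ι : H → H) (vmap : H → V) (S : Finset V) (h : H) :
    h ∈ cutset ι vmap S ↔ vmap h ∈ S ∧ vmap (ι h) ∉ S := by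
  simp [cutset]

lemma mem_minCut_iff (ι : H → H) (vmap : H → V) (ℓ : H → ℝ) (S : Finset V) (h : H) :
    h ∈ minCut ι vmap ℓ S ↔ h ∈ cutset ι vmap S ∧ ∀ k ∈ cutset ι vmap S, ℓ h ≤ ℓ k := by
  simp [minCut]

lemma aFun_mem (ι : H → H) (vmap : H → V) (ℓ : H → ℝ)
    (hinv : ∀ h, ι (ι h) = h) (hℓsym : ∀ h, ℓ (ι h) = ℓ h) (S : Finset V) :
    aFun ι vmap ℓ S ∈ Uspace ι vmap ℓ := by
  by_cases hcs : (cutset ι vmap S).Nonempty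
  · obtain ⟨h₀, hh₀, hmin⟩ := Finset.exists_min_image (cutset ι vmap S) ℓ hcs
    set j := rnk ℓ h₀ with hjdef
    have hj1 : 1 ≤ j := rnk_pos ℓ h₀
    have hjk : j ≤ (Finset.image ℓ Finset.univ).card := rnk_le_card ℓ h₀
    set f : V → ℝ := fun v => if v ∈ S then (1:ℝ) else 0 with hfdef
    have hfE : f ∈ Espace ι vmap ℓ (j - 1) := by
      intro h hh
      have hlt : ℓ h < ℓ h₀ := lt_of_rnk_lt ℓ (by omega)
      by_cases h1 : vmap h ∈ S <;> by_cases h2 : vmap (ι h) ∈ S <;>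
          simp only [hfdef, if_pos, if_neg, h1, h2, if_true, if_false]
      · exfalso
        have : h ∈ cutset ι vmap S := (mem_cutset_iff ι vmap S h).mpr ⟨h1, h2⟩
        exact absurd (hmin h this) (not_le.mpr hlt)
      · exfalso
        have : ι h ∈ cutset ι vmap S := by
          rw [mem_cutset_iff, hinv]
          exact ⟨h2, h1⟩
        have := hmin _ this
        rw [hℓsym] at this
        exact absurd this (not_le.mpr hlt)
    have hg : gmap ι vmap ℓ j f = aFun ι vmap ℓ S := by
      funext h
      show (if rnk ℓ h = j then f (vmap h) - f (vmap (ι h)) else 0) = _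
      by_cases hr : rnk ℓ h = j
      · have hℓeq : ℓ h = ℓ h₀ := eq_of_rnk_eq ℓ hr
        rw [if_pos hr]
        have hm1 : h ∈ minCut ι vmap ℓ S ↔ h ∈ cutset ι vmap S := by
          rw [mem_minCut_iff]
          exact ⟨fun a => a.1, fun a => ⟨a, fun k hk => hℓeq ▸ hmin k hk⟩⟩
        have hm2 : ι h ∈ minCut ι vmap ℓ S ↔ ι h ∈ cutset ι vmap S := by
          rw [mem_minCut_iff]
          refine ⟨fun a => a.1, fun a => ⟨a, fun k hk => ?_⟩⟩
          rw [hℓsym, hℓeq]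
          exact hmin k hk
        rw [aFun]
        simp only [hm1, hm2, mem_cutset_iff, hinv]
        by_cases h1 : vmap h ∈ S <;> by_cases h2 : vmap (ι h) ∈ S <;>
          simp [hfdef, h1, h2]
      · rw [if_neg hr, aFun]
        have hn1 : h ∉ minCut ι vmap ℓ S := by
          rw [mem_minCut_iff]
          rintro ⟨hc, hm⟩
          exact hr (le_antisymm (rnk_mono ℓ (hm h₀ hh₀)) (rnk_mono ℓ (hmin h hc)))
        have hn2 : ι h ∉ minCut ι vmap ℓ S := by
          rw [mem_minCut_iff]
          rintro ⟨hc, hm⟩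
          have e1 : ℓ (ι h) ≤ ℓ h₀ := hm h₀ hh₀
          have e2 : ℓ h₀ ≤ ℓ (ι h) := hmin _ hc
          have heq : ℓ h = ℓ h₀ := by rw [← hℓsym h]; exact le_antisymm e1 e2
          exact hr (le_antisymm (rnk_mono ℓ heq.le) (rnk_mono ℓ heq.ge))
        simp [hn1, hn2]
    have : aFun ι vmap ℓ S ∈ Lsub ι vmap ℓ (j - 1) := by
      rw [Lsub]
      have hj : j - 1 + 1 = j := by omega
      rw [hj]
      exact ⟨f, hfE, hg⟩
    have hle : Lsub ι vmap ℓ (j - 1) ≤ Uspace ι vmap ℓ :=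
      Finset.le_sup (Finset.mem_range.mpr (by omega))
    exact hle this
  · have : minCut ι vmap ℓ S = ∅ := by
      rw [Finset.not_nonempty_iff_eq_empty] at hcs
      rw [minCut, hcs, Finset.filter_empty]
    have hz : aFun ι vmap ℓ S = 0 := by
      funext h
      simp [aFun, this]
    rw [hz]
    exact Submodule.zero_mem _

lemma key_identity (ι : H → H) (vmap : H → V) (ℓ : H → ℝ)
    (hinv : ∀ h, ι (ι h) = h) (φ : H → ℝ) (hφ : ∀ h, φ (ι h) = - φ h) (S : Finset V) :
    ∑ h ∈ minCut ι vmap ℓ S, φ h = (2:ℝ)⁻¹ * ∑ h, aFun ι vmap ℓ S h * φ h := by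
  set m := minCut ι vmap ℓ S
  have h1 : ∑ h, (if h ∈ m then (1:ℝ) else 0) * φ h = ∑ h ∈ m, φ h := by
    simp [ite_mul]
  have h2 : ∑ h, (if ι h ∈ m then (1:ℝ) else 0) * φ h = - ∑ h ∈ m, φ h := by
    have e : Function.Involutive ι := hinv
    set p : Equiv.Perm H := Function.Involutive.toPerm ι e with hp
    have hsum := Equiv.sum_comp p (fun h => (if ι h ∈ m then (1:ℝ) else 0) * φ h)
    rw [← hsum]
    have : ∀ h, (if ι (p h) ∈ m then (1:ℝ) else 0) * φ (p h) =
        -((if h ∈ m then (1:ℝ) else 0) * φ h) := by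
      intro h
      have hph : p h = ι h := rfl
      rw [hph, hinv, hφ]
      ring
    rw [Finset.sum_congr rfl (fun h _ => this h), Finset.sum_neg_distrib, h1]
  have h3 : ∑ h, aFun ι vmap ℓ S h * φ h = 2 * ∑ h ∈ m, φ h := by
    have : ∀ h, aFun ι vmap ℓ S h * φ h =
        (if h ∈ m then (1:ℝ) else 0) * φ h - (if ι h ∈ m then (1:ℝ) else 0) * φ h := by
      intro h; rw [aFun]; ring
    rw [Finset.sum_congr rfl (fun h _ => this h), Finset.sum_sub_distrib, h1, h2]
    ring
  rw [h3]
  ring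

end S4b

namespace S4c
open Finset Module S4 S4b

variable {H V : Type*} [Fintype H] [DecidableEq H] [Fintype V] [DecidableEq V]

lemma exists_cross (ι : H → H) (vmap : H → V) {S : Finset V} {a b : V}
    (hab : Relation.ReflTransGen (fun u w => ∃ h, vmap h = u ∧ vmap (ι h) = w) a b)
    (ha : a ∈ S) (hb : b ∉ S) :
    ∃ h, vmap h ∈ S ∧ vmap (ι h) ∉ S := by
  revert hb
  induction hab with
  | refl => exact fun hb => absurd ha hb
  | tail hab hbc ih =>
    intro hb
    rename_i c d
    by_cases hc : c ∈ S
    · obtain ⟨h, h1, h2⟩ := hbc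
      exact ⟨h, by rw [h1]; exact hc, by rw [h2]; exact hb⟩
    · exact ih hc

lemma const_of_ker (ι : H → H) (vmap : H → V) (ℓ : H → ℝ) [Nonempty V]
    (hconn : Connected ι vmap) (f : V → ℝ)
    (hf : ∀ S : Finset V, ∑ h ∈ minCut ι vmap ℓ S, (f (vmap (ι h)) - f (vmap h)) = 0) :
    ∀ v w : V, f v = f w := by
  obtain ⟨v₀, -, hmax⟩ := Finset.exists_max_image Finset.univ f ⟨Classical.arbitrary V,
    Finset.mem_univ _⟩
  suffices hconst : ∀ v, f v = f v₀ by intro v w; rw [hconst v, hconst w]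
  by_contra hc
  push_neg at hc
  obtain ⟨w, hw⟩ := hc
  set S := Finset.univ.filter (fun v => f v = f v₀) with hS
  have hv₀S : v₀ ∈ S := by simp [hS]
  have hwS : w ∉ S := by simp [hS]; exact hw
  obtain ⟨h₀, hch⟩ := exists_cross ι vmap (hconn v₀ w) hv₀S hwS
  have hcsne : (cutset ι vmap S).Nonempty :=
    ⟨h₀, (mem_cutset_iff ι vmap S h₀).mpr hch⟩
  obtain ⟨h₁, hh₁, hmin⟩ := Finset.exists_min_image _ ℓ hcsne
  have hne : (minCut ι vmap ℓ S).Nonempty :=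
    ⟨h₁, (mem_minCut_iff ι vmap ℓ S h₁).mpr ⟨hh₁, hmin⟩⟩
  have hneg : ∀ h ∈ minCut ι vmap ℓ S, f (vmap (ι h)) - f (vmap h) < (fun _ => (0:ℝ)) h := by
    intro h hh
    have hcut := ((mem_minCut_iff ι vmap ℓ S h).mp hh).1
    rw [mem_cutset_iff] at hcut
    have e1 : f (vmap h) = f v₀ := by
      have := hcut.1; simp [hS] at this; exact this
    have e2 : f (vmap (ι h)) ≠ f v₀ := by
      have := hcut.2; simp [hS] at this; exact this
    have e3 : f (vmap (ι h)) ≤ f v₀ := hmax _ (Finset.mem_univ _)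
    have := lt_of_le_of_ne e3 e2
    simp only
    linarith [e1 ▸ this]
  have hlt := Finset.sum_lt_sum_of_nonempty hne hneg
  rw [Finset.sum_const, smul_zero] at hlt
  exact absurd (hf S) (ne_of_lt hlt)

noncomputable def Dmap (U : Submodule ℝ (H → ℝ)) : (H → ℝ) →ₗ[ℝ] Module.Dual ℝ ↥U where
  toFun φ :=
    { toFun := fun u => ∑ h, (u : H → ℝ) h * φ h
      map_add' := by intro u v; simp [add_mul, Finset.sum_add_distrib]
      map_smul' := by
        intro c u
        simp only [SetLike.val_smul, Pi.smul_apply, smul_eq_mul, RingHom.id_apply,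
          Finset.mul_sum, mul_assoc] }
  map_add' := by intro φ ψ; ext u; simp [mul_add, Finset.sum_add_distrib]
  map_smul' := by intro c φ; ext u; simp [Finset.mul_sum, mul_left_comm]

noncomputable def Emap (U : Submodule ℝ (H → ℝ)) (A : Finset V → ↥U) :
    Module.Dual ℝ ↥U →ₗ[ℝ] (Finset V → ℝ) where
  toFun ξ := fun S => (2:ℝ)⁻¹ * ξ (A S)
  map_add' := by intro ξ η; funext S; simp [mul_add]
  map_smul' := by intro c ξ; funext S; simp; ring

end S4c

open S4 S4b S4c Module

/-- For a finite connected multigraph with symmetric positive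
edge lengths, the map `mdiv : 𝓐 → ℝ^{|B|}` has rank exactly `|V| - 1`. -/
theorem statement4 {H V : Type*} [Fintype H] [DecidableEq H] [Fintype V] [DecidableEq V]
    (ι : H → H) (vmap : H → V) (ℓ : H → ℝ)
    (hinv : ∀ h, ι (ι h) = h) (hfree : ∀ h, ι h ≠ h)
    (hsurj : Function.Surjective vmap) (hconn : Connected ι vmap)
    (hℓpos : ∀ h, 0 < ℓ h) (hℓsym : ∀ h, ℓ (ι h) = ℓ h) :
    Module.finrank ℝ
      (LinearMap.range ((mdivMap ι vmap ℓ).comp (asymSpace ι).subtype)) =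
      Fintype.card V - 1 := by
  rcases isEmpty_or_nonempty V with hV | hV
  · haveI : IsEmpty H := ⟨fun h => IsEmpty.false (vmap h)⟩
    have hz : (mdivMap ι vmap ℓ).comp (asymSpace ι).subtype = 0 := by
      apply LinearMap.ext
      intro φ
      funext S
      show ∑ h ∈ minCut ι vmap ℓ S, (φ : H → ℝ) h = 0
      exact Finset.sum_eq_zero (fun h _ => isEmptyElim h)
    rw [hz, LinearMap.range_zero, finrank_bot]
    have : Fintype.card V = 0 := Fintype.card_eq_zero
    omega
  · set F := (mdivMap ι vmap ℓ).comp (asymSpace ι).subtype with hFdef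
    -- lower bound
    have hgradmem : ∀ f : V → ℝ, gradFun ι vmap f ∈ asymSpace ι := by
      intro f h
      show f (vmap (ι (ι h))) - f (vmap (ι h)) = -(f (vmap (ι h)) - f (vmap h))
      rw [hinv]
      ring
    let gradL : (V → ℝ) →ₗ[ℝ] (H → ℝ) :=
      { toFun := fun f => gradFun ι vmap f
        map_add' := by intro a b; funext h; simp [gradFun]; ring
        map_smul' := by intro c a; funext h; simp [gradFun]; ring }
    let G : (V → ℝ) →ₗ[ℝ] ↥(asymSpace ι) := gradL.codRestrict _ hgradmem
    let Fg := F.comp G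
    have hFg : ∀ (f : V → ℝ) (S : Finset V),
        Fg f S = ∑ h ∈ minCut ι vmap ℓ S, (f (vmap (ι h)) - f (vmap h)) := fun f S => rfl
    have hone : (fun _ => (1:ℝ) : V → ℝ) ≠ 0 := by
      intro hcon
      have := congrFun hcon (Classical.arbitrary V)
      norm_num at this
    have hker : LinearMap.ker Fg = Submodule.span ℝ {(fun _ => (1:ℝ) : V → ℝ)} := by
      apply le_antisymm
      · intro f hf
        rw [LinearMap.mem_ker] at hf
        have hf' : ∀ S : Finset V,
            ∑ h ∈ minCut ι vmap ℓ S, (f (vmap (ι h)) - f (vmap h)) = 0 := by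
          intro S
          rw [← hFg f S, hf]
          rfl
        have hconst := const_of_ker ι vmap ℓ hconn f hf'
        rw [Submodule.mem_span_singleton]
        refine ⟨f (Classical.arbitrary V), ?_⟩
        funext v
        simp only [Pi.smul_apply, smul_eq_mul, mul_one]
        exact hconst _ v
      · rw [Submodule.span_le, Set.singleton_subset_iff, SetLike.mem_coe, LinearMap.mem_ker]
        funext S
        rw [hFg]
        exact Finset.sum_eq_zero (fun h _ => by ring)
    have hrn := LinearMap.finrank_range_add_finrank_ker Fg
    rw [hker, finrank_span_singleton hone, Module.finrank_pi] at hrn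
    have hlow : Fintype.card V - 1 ≤ finrank ℝ (LinearMap.range F) := by
      have hle : LinearMap.range Fg ≤ LinearMap.range F := LinearMap.range_comp_le_range G F
      have := Submodule.finrank_mono hle
      omega
    -- upper bound
    set U := Uspace ι vmap ℓ with hU
    let A : Finset V → ↥U := fun S => ⟨aFun ι vmap ℓ S, aFun_mem ι vmap ℓ hinv hℓsym S⟩
    have hF : F = (Emap U A).comp ((Dmap U).comp (asymSpace ι).subtype) := by
      apply LinearMap.ext
      intro φ
      funext S
      show ∑ h ∈ minCut ι vmap ℓ S, (φ : H → ℝ) h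
        = (2:ℝ)⁻¹ * ∑ h, aFun ι vmap ℓ S h * (φ : H → ℝ) h
      exact key_identity ι vmap ℓ hinv (φ : H → ℝ) φ.2 S
    have hup : finrank ℝ (LinearMap.range F) ≤ Fintype.card V - 1 := by
      rw [hF]
      calc finrank ℝ (LinearMap.range ((Emap U A).comp ((Dmap U).comp (asymSpace ι).subtype)))
          ≤ finrank ℝ (LinearMap.range (Emap U A)) :=
            Submodule.finrank_mono (LinearMap.range_comp_le_range _ _)
        _ ≤ finrank ℝ (Module.Dual ℝ ↥U) := LinearMap.finrank_range_le _
        _ = finrank ℝ ↥U := Subspace.dual_finrank_eq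
        _ ≤ Fintype.card V - 1 := uspace_dim ι vmap ℓ
    omega
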